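/- More generally, for every natural number p and each j ∈ {0,...,n}, the p-th derivative of the Lagrange basis polynomial l_j satisfies l_j^{(p)}(x) = ∑_{m=0}^n [Z^p]_{mj} l_m(x) for all x, where Z is the differentiation matrix Z_{jk} = l_k'(x_j). -/

import Mathlib

open Polynomial

lemma aux_key (n : ℕ) (x : Fin (n + 1) → ℝ) (hx : Function.Injective x) (p : ℕ)
    (j : Fin (n + 1)) :
    Polynomial.derivative^[p] (Lagrange.basis Finset.univ x j) =
      ∑ m : Fin (n + 1),
        Polynomial.C (((Matrix.of (fun a b : Fin (n + 1) =>
          Polynomial.eval (x a) (Polynomial.derivative (Lagrange.basis Finset.univ x b))))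
          ^ p) m j) * Lagrange.basis Finset.univ x m := by
  induction p with
  | zero =>
    simp only [Function.iterate_zero, id_eq, pow_zero, Matrix.one_apply]
    rw [Finset.sum_eq_single j]
    · simp
    · intro b _ hb; simp [hb]
    · simp
  | succ p ih =>
    have hinj : Set.InjOn x (Finset.univ : Finset (Fin (n + 1))) := hx.injOn
    set Z := Matrix.of (fun a b : Fin (n + 1) =>
      Polynomial.eval (x a) (Polynomial.derivative (Lagrange.basis Finset.univ x b)))
    have hstep : Polynomial.derivative^[p + 1] (Lagrange.basis Finset.univ x j) =
        ∑ m : Fin (n + 1), Polynomial.C ((Z ^ p) m j) *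
          Polynomial.derivative (Lagrange.basis Finset.univ x m) := by
      rw [Function.iterate_succ_apply', ih]
      simp [Polynomial.derivative_sum]
    -- degree bound
    have hdeg : (Polynomial.derivative^[p + 1] (Lagrange.basis Finset.univ x j)).degree
        < (Finset.univ : Finset (Fin (n + 1))).card := by
      rw [hstep]
      refine lt_of_le_of_lt (Polynomial.degree_sum_le _ _) ?_
      rw [Finset.sup_lt_iff (by exact_mod_cast WithBot.bot_lt_coe ((Finset.univ : Finset (Fin (n + 1))).card) : (⊥ : WithBot ℕ) < ((Finset.univ : Finset (Fin (n + 1))).card : WithBot ℕ))]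
      intro m _
      refine lt_of_le_of_lt (Polynomial.degree_mul_le _ _) ?_
      have h1 : (Polynomial.C ((Z ^ p) m j)).degree ≤ 0 := Polynomial.degree_C_le
      have h2 : (Polynomial.derivative (Lagrange.basis Finset.univ x m)).degree
          < (Lagrange.basis Finset.univ x m).degree := by
        apply Polynomial.degree_derivative_lt
        exact Lagrange.basis_ne_zero hinj (Finset.mem_univ m)
      have h3 : (Lagrange.basis Finset.univ x m).degree ≤
          ((Finset.univ : Finset (Fin (n + 1))).card : WithBot ℕ) := by
        rw [Lagrange.degree_basis hinj (Finset.mem_univ m)]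
        exact_mod_cast Nat.sub_le _ _
      calc (Polynomial.C ((Z ^ p) m j)).degree +
            (Polynomial.derivative (Lagrange.basis Finset.univ x m)).degree
          ≤ 0 + (Polynomial.derivative (Lagrange.basis Finset.univ x m)).degree :=
            add_le_add h1 le_rfl
        _ = (Polynomial.derivative (Lagrange.basis Finset.univ x m)).degree := by rw [zero_add]
        _ < (Lagrange.basis Finset.univ x m).degree := h2
        _ ≤ _ := h3
    have := Lagrange.eq_interpolate hinj hdeg
    rw [this, Lagrange.interpolate_apply]
    refine Finset.sum_congr rfl fun a _ => ?_
    congr 1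
    congr 1
    rw [hstep]
    simp only [Polynomial.eval_finset_sum, Polynomial.eval_mul, Polynomial.eval_C]
    rw [pow_succ']
    rw [Matrix.mul_apply]
    refine Finset.sum_congr rfl fun m _ => ?_
    rw [mul_comm]
    rfl

theorem stmt_11 (n : ℕ) (x : Fin (n + 1) → ℝ) (hx : Function.Injective x)
    (p : ℕ) (j : Fin (n + 1)) (t : ℝ) :
    Polynomial.eval t (Polynomial.derivative^[p] (Lagrange.basis Finset.univ x j)) =
      ∑ m : Fin (n + 1),
        ((Matrix.of (fun a b : Fin (n + 1) =>
          Polynomial.eval (x a) (Polynomial.derivative (Lagrange.basis Finset.univ x b))))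
          ^ p) m j * Polynomial.eval t (Lagrange.basis Finset.univ x m) := by
  rw [aux_key n x hx p j]
  simp [Polynomial.eval_finset_sum]
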